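/- Let l₁ ≤ l₂ ≤ … ≤ l_B be the elements of a multiset I, and L₁ ≥ L₂ ≥ … ≥ L_{B'} (B' ≤ B) elements of a multiset O. Among all ways of choosing B' elements of I to remove and B' elements of O to insert, the choice that removes l₁,…,l_{B'} and inserts L₁,…,L_{B'} maximizes ∑_{k} V(k) over the resulting multiset, for every nondecreasing V : ℕ → ℝ. -/

import Mathlib

/-- The multiset of the `k` smallest elements of `Z`. -/
def Multiset.smallest (k : ℕ) (Z : Multiset ℕ) : Multiset ℕ :=
  ((Z.sort (· ≤ ·)).take k : List ℕ)

/-- The multiset of the `k` largest elements of `Z`. -/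
def Multiset.largest (k : ℕ) (Z : Multiset ℕ) : Multiset ℕ :=
  ((Z.sort (· ≤ ·)).reverse.take k : List ℕ)

section Aux

variable {α : Type*} {rel : α → α → Prop}

lemma forall₂_trans (htrans : Transitive rel) :
    ∀ {l₁ l₂ l₃ : List α}, List.Forall₂ rel l₁ l₂ → List.Forall₂ rel l₂ l₃ →
      List.Forall₂ rel l₁ l₃ := by
  intro l₁ l₂ l₃ h12 h23
  induction h12 generalizing l₃ with
  | nil => cases h23; exact List.Forall₂.nil
  | cons hab _ ih =>
    cases h23 with
    | cons hbc h' => exact List.Forall₂.cons (htrans hab hbc) (ih h')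

lemma take_shift : ∀ {n : ℕ} {l : List α} {a : α}, (a :: l).Pairwise rel →
    n ≤ l.length → List.Forall₂ rel (List.take n (a :: l)) (List.take n l) := by
  intro n
  induction n with
  | zero => intro l a _ _; simp
  | succ n ih =>
    intro l a hs hn
    match l with
    | [] => simp at hn
    | b :: l' =>
      have hab : rel a b := (List.pairwise_cons.mp hs).1 b (by simp)
      simp only [List.take_succ_cons]
      exact List.Forall₂.cons hab
        (ih (List.Pairwise.tail hs) (by simpa using hn))

lemma forall₂_take_of_sublist (htrans : Transitive rel) (hrefl : ∀ a : α, rel a a) :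
    ∀ {r l : List α}, List.Sublist r l → l.Pairwise rel →
      List.Forall₂ rel (l.take r.length) r := by
  intro r l h
  induction h with
  | slnil => intro _; simp
  | @cons l₁ l₂ a h ih =>
    intro hs
    have h1 := ih (List.Pairwise.tail hs)
    have h2 : List.Forall₂ rel (List.take l₁.length (a :: l₂)) (List.take l₁.length l₂) :=
      take_shift hs h.length_le
    exact forall₂_trans htrans h2 h1
  | @cons_cons l₁ l₂ a h ih =>
    intro hs
    simpa using List.Forall₂.cons (hrefl a) (ih (List.Pairwise.tail hs))

end Aux

lemma smallest_le_sum (V : ℕ → ℝ) (hV : Monotone V) {R I : Multiset ℕ} (hR : R ≤ I) :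
    ((Multiset.smallest R.card I).map V).sum ≤ (R.map V).sum := by
  set l := I.sort (· ≤ ·) with hl
  set r := R.sort (· ≤ ·) with hr
  have hsub : List.Sublist r l := by
    apply List.sublist_of_subperm_of_pairwise _ (Multiset.pairwise_sort R _) (Multiset.pairwise_sort I _)
    rw [← Multiset.coe_le, Multiset.sort_eq, Multiset.sort_eq]
    exact hR
  have hf : List.Forall₂ (· ≤ ·) (l.take r.length) r :=
    forall₂_take_of_sublist (rel := (· ≤ ·)) (fun _ _ _ h1 h2 => le_trans h1 h2) (fun a => le_refl a)
      hsub (Multiset.pairwise_sort I _)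
  have hfV : List.Forall₂ (· ≤ ·) ((l.take r.length).map V) (r.map V) := by
    rw [List.forall₂_map_left_iff, List.forall₂_map_right_iff]
    exact hf.imp fun {_ _} h => hV h
  have hsum := hfV.sum_le_sum
  have hcard : r.length = R.card := Multiset.length_sort _
  have hRsum : (R.map V).sum = (r.map V).sum := by
    conv_lhs => rw [← Multiset.sort_eq R (· ≤ ·)]
    rw [Multiset.map_coe, Multiset.sum_coe]
  have hSsum : ((Multiset.smallest R.card I).map V).sum = ((l.take r.length).map V).sum := by
    rw [Multiset.smallest, hcard, Multiset.map_coe, Multiset.sum_coe]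
  rw [hRsum, hSsum]
  exact hsum

lemma sum_le_largest (V : ℕ → ℝ) (hV : Monotone V) {S O : Multiset ℕ} (hS : S ≤ O) :
    (S.map V).sum ≤ ((Multiset.largest S.card O).map V).sum := by
  set l := (O.sort (· ≤ ·)).reverse with hl
  set s := (S.sort (· ≤ ·)).reverse with hs
  have hsortl : l.Pairwise (fun a b => b ≤ a) :=
    List.pairwise_reverse.mpr (Multiset.pairwise_sort O _)
  have hsorts : s.Pairwise (fun a b => b ≤ a) :=
    List.pairwise_reverse.mpr (Multiset.pairwise_sort S _)
  have hperm : List.Subperm s l := by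
    refine ((List.reverse_perm _).subperm).trans ?_
    refine List.Subperm.trans ?_ ((List.reverse_perm _).symm.subperm)
    rw [← Multiset.coe_le, Multiset.sort_eq, Multiset.sort_eq]
    exact hS
  have hanti : IsAntisymm ℕ (fun a b => b ≤ a) := ⟨fun a b h1 h2 => le_antisymm h2 h1⟩
  have hsub : List.Sublist s l := List.sublist_of_subperm_of_pairwise hperm hsorts hsortl
  have hf : List.Forall₂ (fun a b => b ≤ a) (l.take s.length) s :=
    forall₂_take_of_sublist (rel := fun a b => b ≤ a) (fun _ _ _ h1 h2 => le_trans h2 h1) (fun a => le_refl a)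
      hsub hsortl
  have hfV : List.Forall₂ (· ≤ ·) (s.map V) ((l.take s.length).map V) := by
    rw [List.forall₂_map_left_iff, List.forall₂_map_right_iff]
    exact (hf.flip).imp fun {_ _} h => hV h
  have hsum := hfV.sum_le_sum
  have hcard : s.length = S.card := by simp [hs]
  have hSsum : (S.map V).sum = (s.map V).sum := by
    conv_lhs => rw [← Multiset.sort_eq S (· ≤ ·)]
    have : ((S.sort (· ≤ ·) : List ℕ) : Multiset ℕ) = (s : Multiset ℕ) :=
      Multiset.coe_eq_coe.mpr (List.reverse_perm _).symm
    rw [this, Multiset.map_coe, Multiset.sum_coe]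
  have hLsum : ((Multiset.largest S.card O).map V).sum = ((l.take s.length).map V).sum := by
    rw [Multiset.largest, hcard, Multiset.map_coe, Multiset.sum_coe]
  rw [hSsum, hLsum]
  exact hsum

/-- Removing the `B'` smallest cached lifetimes and inserting the `B'` largest
outside lifetimes maximizes the total cache value among all such batch swaps,
for every nondecreasing value function `V`. -/
theorem best_batch_swap (V : ℕ → ℝ) (hV : Monotone V)
    (I O : Multiset ℕ) (B' : ℕ) (hB'I : B' ≤ I.card) (hB'O : B' ≤ O.card)
    (R S : Multiset ℕ) (hR : R ≤ I) (hS : S ≤ O)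
    (hRcard : R.card = B') (hScard : S.card = B') :
    ((I - R + S).map V).sum ≤
      ((I - Multiset.smallest B' I + Multiset.largest B' O).map V).sum := by
  have hsmall_le : Multiset.smallest B' I ≤ I := by
    rw [Multiset.smallest]
    conv_rhs => rw [← Multiset.sort_eq I (· ≤ ·)]
    exact Multiset.coe_le.mpr (List.take_sublist _ _).subperm
  have h1 : ((I - R).map V).sum + (R.map V).sum = (I.map V).sum := by
    rw [← Multiset.sum_add, ← Multiset.map_add, tsub_add_cancel_of_le hR]
  have h2 : ((I - Multiset.smallest B' I).map V).sum
      + ((Multiset.smallest B' I).map V).sum = (I.map V).sum := by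
    rw [← Multiset.sum_add, ← Multiset.map_add, tsub_add_cancel_of_le hsmall_le]
  have h3 : ((Multiset.smallest B' I).map V).sum ≤ (R.map V).sum := by
    have := smallest_le_sum V hV hR
    rwa [hRcard] at this
  have h4 : (S.map V).sum ≤ ((Multiset.largest B' O).map V).sum := by
    have := sum_le_largest V hV hS
    rwa [hScard] at this
  have g1 : ((I - R + S).map V).sum = ((I - R).map V).sum + (S.map V).sum := by
    rw [Multiset.map_add, Multiset.sum_add]
  have g2 : ((I - Multiset.smallest B' I + Multiset.largest B' O).map V).sum
      = ((I - Multiset.smallest B' I).map V).sum + ((Multiset.largest B' O).map V).sum := by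
    rw [Multiset.map_add, Multiset.sum_add]
  rw [g1, g2]
  linarith
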